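/- Let V be a finite set with |V| = k ≥ 4, let ℓ : Fin k → V be a bijection, and let E = { {ℓ(i), ℓ(i+1)} : 0 ≤ i ≤ k−2 } be the associated Hamiltonian path edge set. Let e = {ℓ(j), ℓ(j+1)} be an internal edge, i.e. 1 ≤ j ≤ k−3. Then the set of unordered pairs e′ of distinct elements of V such that (E \ {e}) ∪ {e′} is realized as a Hamiltonian path by some bijection Fin k → V has exactly four elements, namely {ℓ(j), ℓ(j+1)}, {ℓ(0), ℓ(j+1)}, {ℓ(j), ℓ(k−1)}, and {ℓ(0), ℓ(k−1)}. (This is the paper's claim that when removing the transposition splits the sequential collection into two disjoint sequential collections, exactly four transpositions reattach them, giving four internal cofaces with possibly non-zero coefficient.) -/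

import Mathlib

section InternalReplacementsAux

/-- An injective ±1 walk is monotone. -/
lemma walk_mono (f : ℕ → ℕ) (a b : ℕ)
    (hinj : ∀ x y, a ≤ x → x ≤ b → a ≤ y → y ≤ b → f x = f y → x = y)
    (hstep : ∀ i, a ≤ i → i < b → f (i+1) = f i + 1 ∨ f i = f (i+1) + 1) :
    (∀ i, a ≤ i → i ≤ b → f i = f a + (i - a)) ∨
    (∀ i, a ≤ i → i ≤ b → f i + (i - a) = f a) := by
  by_cases hab : a < b
  · rcases hstep a le_rfl hab with h1 | h1
    · left
      have key : ∀ d, a + d < b → f (a + d + 1) = f (a + d) + 1 := by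
        intro d
        induction d with
        | zero => intro _; simp only [Nat.add_zero]; exact h1
        | succ n ih =>
          intro hlt
          have hprev := ih (by omega)
          have hs : a + (n+1) = (a + n) + 1 := rfl
          rw [hs]
          rcases hstep (a + n + 1) (by omega) (by omega) with h | h
          · exact h
          · exfalso
            have heq : f (a + n + 1 + 1) = f (a + n) := by omega
            have := hinj _ _ (by omega) (by omega) (by omega) (by omega) heq
            omega
      intro i hai hib
      obtain ⟨d, rfl⟩ : ∃ d, i = a + d := ⟨i - a, by omega⟩
      induction d with
      | zero => simp
      | succ n ih =>
        have hk := key n (by omega)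
        have hi := ih (by omega) (by omega)
        have hs : a + (n+1) = (a + n) + 1 := rfl
        rw [hs]
        omega
    · right
      have key : ∀ d, a + d < b → f (a + d) = f (a + d + 1) + 1 := by
        intro d
        induction d with
        | zero => intro _; simp only [Nat.add_zero]; exact h1
        | succ n ih =>
          intro hlt
          have hprev := ih (by omega)
          have hs : a + (n+1) = (a + n) + 1 := rfl
          rw [hs]
          rcases hstep (a + n + 1) (by omega) (by omega) with h | h
          · exfalso
            have heq : f (a + n + 1 + 1) = f (a + n) := by omega
            have := hinj _ _ (by omega) (by omega) (by omega) (by omega) heq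
            omega
          · exact h
      intro i hai hib
      obtain ⟨d, rfl⟩ : ∃ d, i = a + d := ⟨i - a, by omega⟩
      induction d with
      | zero => simp
      | succ n ih =>
        have hk := key n (by omega)
        have hi := ih (by omega) (by omega)
        have hs : a + (n+1) = (a + n) + 1 := rfl
        rw [hs]
        omega
  · left
    intro i hai hib
    have : i = a := by omega
    subst this
    simp

lemma block_endpoints (f : ℕ → ℕ) (a b lo hi : ℕ) (hab : a ≤ b)
    (hmono : (∀ i, a ≤ i → i ≤ b → f i = f a + (i - a)) ∨
             (∀ i, a ≤ i → i ≤ b → f i + (i - a) = f a))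
    (hrange : ∀ i, a ≤ i → i ≤ b → lo ≤ f i ∧ f i ≤ hi)
    (hlo : ∃ x, a ≤ x ∧ x ≤ b ∧ f x = lo)
    (hhi : ∃ x, a ≤ x ∧ x ≤ b ∧ f x = hi) :
    (f a = lo ∧ f b = hi) ∨ (f a = hi ∧ f b = lo) := by
  obtain ⟨x, hx1, hx2, hx3⟩ := hlo
  obtain ⟨y, hy1, hy2, hy3⟩ := hhi
  rcases hmono with h | h
  · left
    have h1 := h x hx1 hx2
    have h2 := h y hy1 hy2
    have h3 := h b hab le_rfl
    have h4 := hrange a le_rfl hab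
    have h5 := hrange b hab le_rfl
    omega
  · right
    have h1 := h x hx1 hx2
    have h2 := h y hy1 hy2
    have h3 := h b hab le_rfl
    have h4 := hrange a le_rfl hab
    have h5 := hrange b hab le_rfl
    omega

lemma edge_inj {V : Type*} {k : ℕ} (n : Fin k ≃ V) {a b : ℕ} (ha : a + 1 < k) (hb : b + 1 < k)
    (h : s(n ⟨a, by omega⟩, n ⟨a+1, ha⟩) = s(n ⟨b, by omega⟩, n ⟨b+1, hb⟩)) : a = b := by
  rw [Sym2.eq_iff] at h
  rcases h with ⟨h1, h2⟩ | ⟨h1, h2⟩ <;>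
  · have e1 := n.injective h1
    have e2 := n.injective h2
    rw [Fin.mk.injEq] at e1 e2
    omega

lemma sym2_mk_congr {V : Type*} {k : ℕ} (ℓ : Fin k ≃ V) {a b c d : ℕ}
    (ha : a < k) (hb : b < k) (hc : c < k) (hd : d < k) (h1 : a = c) (h2 : b = d) :
    s(ℓ ⟨a, ha⟩, ℓ ⟨b, hb⟩) = s(ℓ ⟨c, hc⟩, ℓ ⟨d, hd⟩) := by
  subst h1; subst h2; rfl

lemma sym2_mk_ne {V : Type*} {k : ℕ} (ℓ : Fin k ≃ V) {a b c d : ℕ}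
    (ha : a < k) (hb : b < k) (hc : c < k) (hd : d < k)
    (h : ¬((a = c ∧ b = d) ∨ (a = d ∧ b = c))) :
    s(ℓ ⟨a, ha⟩, ℓ ⟨b, hb⟩) ≠ s(ℓ ⟨c, hc⟩, ℓ ⟨d, hd⟩) := by
  intro hx
  rw [Sym2.eq_iff] at hx
  apply h
  rcases hx with ⟨h1, h2⟩ | ⟨h1, h2⟩
  · left
    have e1 := ℓ.injective h1
    have e2 := ℓ.injective h2
    rw [Fin.mk.injEq] at e1 e2
    exact ⟨e1, e2⟩
  · right
    have e1 := ℓ.injective h1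
    have e2 := ℓ.injective h2
    rw [Fin.mk.injEq] at e1 e2
    exact ⟨e1, e2⟩

end InternalReplacementsAux

/-- A bijection `ℓ : Fin k ≃ V` realizes an edge set `E` (a set of unordered pairs of
elements of `V`) as a Hamiltonian path if `E = { {ℓ i, ℓ (i+1)} : 0 ≤ i ≤ k − 2 }`. -/
def realizesPath {V : Type*} {k : ℕ} (ℓ : Fin k ≃ V) (E : Set (Sym2 V)) : Prop :=
  E = { e | ∃ i : ℕ, ∃ h : i + 1 < k, e = s(ℓ ⟨i, Nat.lt_of_succ_lt h⟩, ℓ ⟨i + 1, h⟩) }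

lemma realizes_of_spec {V : Type*} {k : ℕ}
    (ℓ : Fin k ≃ V) (E : Set (Sym2 V)) (hE : realizesPath ℓ E)
    (j : ℕ) (hjk : j + 1 < k)
    (e : Sym2 V) (he : e = s(ℓ ⟨j, by omega⟩, ℓ ⟨j+1, hjk⟩))
    (e' : Sym2 V)
    (p : ℕ → ℕ) (hlt : ∀ i, i < k → p i < k)
    (hinj : ∀ a b, a < k → b < k → p a = p b → a = b)
    (i₀ : ℕ) (hi₀ : i₀ + 1 < k)
    (he' : e' = s(ℓ ⟨p i₀, hlt _ (by omega)⟩, ℓ ⟨p (i₀+1), hlt _ hi₀⟩))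
    (hfwd : ∀ t, t + 1 < k → t ≠ j → ∃ i, ∃ _ : i + 1 < k,
        (p i = t ∧ p (i+1) = t+1) ∨ (p i = t+1 ∧ p (i+1) = t))
    (hbwd : ∀ i, i + 1 < k → i ≠ i₀ → ∃ t, t + 1 < k ∧ t ≠ j ∧
        ((p i = t ∧ p (i+1) = t+1) ∨ (p i = t+1 ∧ p (i+1) = t))) :
    ∃ m : Fin k ≃ V, realizesPath m ((E \ {e}) ∪ {e'}) := by
  have hg : Function.Injective (fun x : Fin k => (⟨p x.1, hlt _ x.2⟩ : Fin k)) := by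
    intro a b hab
    rw [Fin.mk.injEq] at hab
    exact Fin.ext (hinj _ _ a.2 b.2 hab)
  let π : Fin k ≃ Fin k := Equiv.ofBijective _ (Finite.injective_iff_bijective.mp hg)
  refine ⟨π.trans ℓ, ?_⟩
  set m : Fin k ≃ V := π.trans ℓ with hmdef
  have hm : ∀ (i : ℕ) (h : i < k), m ⟨i, h⟩ = ℓ ⟨p i, hlt i h⟩ := fun i h => rfl
  have hedge : ∀ (i : ℕ) (h : i+1 < k) (t : ℕ) (ht : t+1 < k),
      ((p i = t ∧ p (i+1) = t+1) ∨ (p i = t+1 ∧ p (i+1) = t)) →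
      s(m ⟨i, by omega⟩, m ⟨i+1, h⟩) = s(ℓ ⟨t, by omega⟩, ℓ ⟨t+1, ht⟩) := by
    intro i h t ht hc
    rw [hm, hm]
    rcases hc with ⟨h1, h2⟩ | ⟨h1, h2⟩
    · rw [show (⟨p i, hlt _ (by omega)⟩ : Fin k) = ⟨t, by omega⟩ from Fin.ext h1,
        show (⟨p (i+1), hlt _ h⟩ : Fin k) = ⟨t+1, ht⟩ from Fin.ext h2]
    · rw [show (⟨p i, hlt _ (by omega)⟩ : Fin k) = ⟨t+1, ht⟩ from Fin.ext h1,
        show (⟨p (i+1), hlt _ h⟩ : Fin k) = ⟨t, by omega⟩ from Fin.ext h2]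
      exact Sym2.eq_swap
  rw [realizesPath]
  ext x
  constructor
  · rintro (⟨hxE, hxe⟩ | hx)
    · rw [hE] at hxE
      obtain ⟨t, ht, rfl⟩ := hxE
      simp only [Set.mem_singleton_iff] at hxe
      have htj : t ≠ j := by
        rintro rfl
        exact hxe (by rw [he])
      obtain ⟨i, hik, hcase⟩ := hfwd t ht htj
      exact ⟨i, hik, (hedge i hik t ht hcase).symm⟩
    · simp only [Set.mem_singleton_iff] at hx
      subst hx
      exact ⟨i₀, hi₀, by rw [he']; rw [hm, hm]⟩
  · rintro ⟨i, hik, rfl⟩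
    by_cases hii : i = i₀
    · subst hii
      right
      simp only [Set.mem_singleton_iff]
      rw [he', hm, hm]
    · obtain ⟨t, ht, htj, hcase⟩ := hbwd i hik hii
      left
      have hx := hedge i hik t ht hcase
      constructor
      · rw [hE]
        exact ⟨t, ht, hx⟩
      · simp only [Set.mem_singleton_iff]
        rw [hx, he]
        intro hbad
        exact htj (edge_inj ℓ ht hjk hbad)

set_option maxHeartbeats 1000000 in
lemma hard_dir {V : Type*} {k : ℕ} (hk : 4 ≤ k)
    (ℓ : Fin k ≃ V) (E : Set (Sym2 V)) (hE : realizesPath ℓ E)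
    (j : ℕ) (hj1 : 1 ≤ j) (hj2 : j ≤ k - 3)
    (e : Sym2 V) (he : e = s(ℓ ⟨j, by omega⟩, ℓ ⟨j + 1, by omega⟩))
    (e' : Sym2 V) (m : Fin k ≃ V) (hm : realizesPath m ((E \ {e}) ∪ {e'})) :
    e' = s(ℓ ⟨j, by omega⟩, ℓ ⟨j + 1, by omega⟩) ∨
    e' = s(ℓ ⟨0, by omega⟩, ℓ ⟨j + 1, by omega⟩) ∨
    e' = s(ℓ ⟨j, by omega⟩, ℓ ⟨k - 1, by omega⟩) ∨
    e' = s(ℓ ⟨0, by omega⟩, ℓ ⟨k - 1, by omega⟩) := by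
  rw [realizesPath] at hm
  set f : ℕ → ℕ := fun i => if h : i < k then ((ℓ.symm (m ⟨i, h⟩)) : Fin k).1 else 0 with hfdef
  have hflt : ∀ i, i < k → f i < k := by
    intro i h
    simp only [hfdef, dif_pos h]
    exact (ℓ.symm (m ⟨i, h⟩)).2
  have hmf : ∀ (i : ℕ) (h : i < k), m ⟨i, h⟩ = ℓ ⟨f i, hflt i h⟩ := by
    intro i h
    have : (⟨f i, hflt i h⟩ : Fin k) = ℓ.symm (m ⟨i, h⟩) := by
      apply Fin.ext
      simp only [hfdef, dif_pos h]
    rw [this, ℓ.apply_symm_apply]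
  have hfinj : ∀ a b, a < k → b < k → f a = f b → a = b := by
    intro a b ha hb hab
    have : m ⟨a, ha⟩ = m ⟨b, hb⟩ := by
      rw [hmf a ha, hmf b hb]
      exact congrArg ℓ (Fin.ext hab)
    have := m.injective this
    rw [Fin.mk.injEq] at this
    exact this
  have hfsurj : ∀ v, v < k → ∃ i, i < k ∧ f i = v := by
    intro v hv
    refine ⟨(m.symm (ℓ ⟨v, hv⟩)).1, (m.symm (ℓ ⟨v, hv⟩)).2, ?_⟩
    have h2 := hmf (m.symm (ℓ ⟨v, hv⟩)).1 (m.symm (ℓ ⟨v, hv⟩)).2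
    rw [Fin.eta, m.apply_symm_apply] at h2
    have := ℓ.injective h2
    rw [Fin.mk.injEq] at this
    omega
  have he'F : e' ∈ (E \ {e}) ∪ {e'} := Or.inr rfl
  rw [hm] at he'F
  obtain ⟨i₀, hi₀, he'0⟩ := he'F
  have huniq : ∀ (i : ℕ) (h : i + 1 < k),
      s(m ⟨i, Nat.lt_of_succ_lt h⟩, m ⟨i+1, h⟩) = e' → i = i₀ := by
    intro i h hx
    rw [he'0] at hx
    exact edge_inj m h hi₀ hx
  have hstep : ∀ i, i + 1 < k → i ≠ i₀ → ∃ t, t + 1 < k ∧ t ≠ j ∧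
      ((f i = t ∧ f (i+1) = t+1) ∨ (f i = t+1 ∧ f (i+1) = t)) := by
    intro i hik hii
    have hxF : s(m ⟨i, Nat.lt_of_succ_lt hik⟩, m ⟨i+1, hik⟩) ∈ (E \ {e}) ∪ {e'} := by
      rw [hm]; exact ⟨i, hik, rfl⟩
    rcases hxF with ⟨hxE, hxe⟩ | hx
    · rw [hE] at hxE
      obtain ⟨t, ht, hx⟩ := hxE
      refine ⟨t, ht, ?_, ?_⟩
      · rintro rfl
        exact hxe (by rw [hx, he]; rfl)
      · rw [hmf i (by omega), hmf (i+1) hik, Sym2.eq_iff] at hx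
        rcases hx with ⟨h1, h2⟩ | ⟨h1, h2⟩
        · left
          have e1 := ℓ.injective h1
          have e2 := ℓ.injective h2
          rw [Fin.mk.injEq] at e1 e2
          exact ⟨e1, e2⟩
        · right
          have e1 := ℓ.injective h1
          have e2 := ℓ.injective h2
          rw [Fin.mk.injEq] at e1 e2
          exact ⟨e1, e2⟩
    · exact absurd (huniq i hik hx) hii
  have hpm : ∀ i, i + 1 < k → i ≠ i₀ → (f (i+1) = f i + 1 ∨ f i = f (i+1) + 1) := by
    intro i h1 h2
    obtain ⟨t, _, _, hc⟩ := hstep i h1 h2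
    omega
  have hsd : ∀ i, i + 1 < k → i ≠ i₀ → (f i ≤ j ↔ f (i+1) ≤ j) := by
    intro i h1 h2
    obtain ⟨t, ht1, ht2, hc⟩ := hstep i h1 h2
    omega
  have hside1 : ∀ x, x ≤ i₀ → (f x ≤ j ↔ f 0 ≤ j) := by
    intro x
    induction x with
    | zero => intro _; rfl
    | succ n ih =>
      intro hx
      have h1 := ih (by omega)
      have h2 := hsd n (by omega) (by omega)
      tauto
  have hside2 : ∀ x, i₀ + 1 ≤ x → x ≤ k - 1 → (f x ≤ j ↔ f (i₀+1) ≤ j) := by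
    have aux : ∀ d, i₀ + 1 + d ≤ k - 1 → (f (i₀ + 1 + d) ≤ j ↔ f (i₀+1) ≤ j) := by
      intro d
      induction d with
      | zero => intro _; rfl
      | succ n ih =>
        intro hd
        have h1 := ih (by omega)
        have h2 := hsd (i₀ + 1 + n) (by omega) (by omega)
        have hs : i₀ + 1 + (n + 1) = (i₀ + 1 + n) + 1 := rfl
        rw [hs]
        tauto
    intro x h1 h2
    have := aux (x - (i₀ + 1)) (by omega)
    rw [show i₀ + 1 + (x - (i₀ + 1)) = x by omega] at this
    exact this
  have hsideAll : ∀ x, x < k → ((f x ≤ j ↔ f 0 ≤ j) ∨ (f x ≤ j ↔ f (i₀+1) ≤ j)) := by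
    intro x hx
    rcases le_or_gt x i₀ with h | h
    · exact Or.inl (hside1 x h)
    · exact Or.inr (hside2 x (by omega) (by omega))
  obtain ⟨x0, hx0k, hx0⟩ := hfsurj 0 (by omega)
  obtain ⟨xj, hxjk, hxj⟩ := hfsurj j (by omega)
  obtain ⟨y1, hy1k, hy1⟩ := hfsurj (j+1) (by omega)
  obtain ⟨yk, hykk, hyk⟩ := hfsurj (k-1) (by omega)
  have hdiff : ¬ (f 0 ≤ j ↔ f (i₀+1) ≤ j) := by
    intro hsame
    have a1 := hsideAll x0 hx0k
    have a2 := hsideAll yk hykk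
    have : f x0 ≤ j := by omega
    have : ¬ f yk ≤ j := by omega
    tauto
  have hmono1 := walk_mono f 0 i₀
    (fun x y _ hx _ hy hxy => hfinj x y (by omega) (by omega) hxy)
    (fun i _ hi => hpm i (by omega) (by omega))
  have hmono2 := walk_mono f (i₀+1) (k-1)
    (fun x y hx hx' hy hy' hxy => hfinj x y (by omega) (by omega) hxy)
    (fun i hi hi' => hpm i (by omega) (by omega))
  have hfin : e' = s(ℓ ⟨f i₀, hflt _ (by omega)⟩, ℓ ⟨f (i₀+1), hflt _ hi₀⟩) := by
    rw [he'0, hmf i₀ (by omega), hmf (i₀+1) hi₀]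
  have hmk : ∀ (a b : ℕ) (ha : a < k) (hb : b < k), f i₀ = a → f (i₀+1) = b →
      e' = s(ℓ ⟨a, ha⟩, ℓ ⟨b, hb⟩) := by
    intro a b ha hb h1 h2
    rw [hfin, show (⟨f i₀, hflt _ (by omega)⟩ : Fin k) = ⟨a, ha⟩ from Fin.ext h1,
      show (⟨f (i₀+1), hflt _ hi₀⟩ : Fin k) = ⟨b, hb⟩ from Fin.ext h2]
  rcases le_or_gt (f 0) j with hs0 | hs0
  · have hs1 : ¬ f (i₀+1) ≤ j := by omega
    have hr1 : ∀ i, 0 ≤ i → i ≤ i₀ → 0 ≤ f i ∧ f i ≤ j := by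
      intro i _ hi
      have := hside1 i hi
      omega
    have hr2 : ∀ i, i₀ + 1 ≤ i → i ≤ k - 1 → j + 1 ≤ f i ∧ f i ≤ k - 1 := by
      intro i h1 h2
      have := hside2 i h1 h2
      have := hflt i (by omega)
      omega
    have hx0b : x0 ≤ i₀ := by
      by_contra hc
      have := hside2 x0 (by omega) (by omega)
      omega
    have hxjb : xj ≤ i₀ := by
      by_contra hc
      have := hside2 xj (by omega) (by omega)
      omega
    have hy1b : i₀ + 1 ≤ y1 := by
      by_contra hc
      have := hside1 y1 (by omega)
      omega
    have hykb : i₀ + 1 ≤ yk := by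
      by_contra hc
      have := hside1 yk (by omega)
      omega
    have hb1 := block_endpoints f 0 i₀ 0 j (by omega) hmono1 hr1
      ⟨x0, by omega, hx0b, hx0⟩ ⟨xj, by omega, hxjb, hxj⟩
    have hb2 := block_endpoints f (i₀+1) (k-1) (j+1) (k-1) (by omega) hmono2 hr2
      ⟨y1, hy1b, by omega, hy1⟩ ⟨yk, hykb, by omega, hyk⟩
    have hfi0 : f i₀ = 0 ∨ f i₀ = j := by omega
    have hfi1 : f (i₀+1) = j + 1 ∨ f (i₀+1) = k - 1 := by omega
    rcases hfi0 with h1 | h1 <;> rcases hfi1 with h2 | h2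
    · exact Or.inr (Or.inl (hmk 0 (j+1) (by omega) (by omega) h1 h2))
    · exact Or.inr (Or.inr (Or.inr (hmk 0 (k-1) (by omega) (by omega) h1 h2)))
    · exact Or.inl (hmk j (j+1) (by omega) (by omega) h1 h2)
    · exact Or.inr (Or.inr (Or.inl (hmk j (k-1) (by omega) (by omega) h1 h2)))
  · have hs1 : f (i₀+1) ≤ j := by omega
    have hr1 : ∀ i, 0 ≤ i → i ≤ i₀ → j + 1 ≤ f i ∧ f i ≤ k - 1 := by
      intro i _ hi
      have := hside1 i hi
      have := hflt i (by omega)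
      omega
    have hr2 : ∀ i, i₀ + 1 ≤ i → i ≤ k - 1 → 0 ≤ f i ∧ f i ≤ j := by
      intro i h1 h2
      have := hside2 i h1 h2
      omega
    have hx0b : i₀ + 1 ≤ x0 := by
      by_contra hc
      have := hside1 x0 (by omega)
      omega
    have hxjb : i₀ + 1 ≤ xj := by
      by_contra hc
      have := hside1 xj (by omega)
      omega
    have hy1b : y1 ≤ i₀ := by
      by_contra hc
      have := hside2 y1 (by omega) (by omega)
      omega
    have hykb : yk ≤ i₀ := by
      by_contra hc
      have := hside2 yk (by omega) (by omega)
      omega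
    have hb1 := block_endpoints f 0 i₀ (j+1) (k-1) (by omega) hmono1 hr1
      ⟨y1, by omega, hy1b, hy1⟩ ⟨yk, by omega, hykb, hyk⟩
    have hb2 := block_endpoints f (i₀+1) (k-1) 0 j (by omega) hmono2 hr2
      ⟨x0, hx0b, by omega, hx0⟩ ⟨xj, hxjb, by omega, hxj⟩
    have hfi0 : f i₀ = j + 1 ∨ f i₀ = k - 1 := by omega
    have hfi1 : f (i₀+1) = 0 ∨ f (i₀+1) = j := by omega
    rcases hfi0 with h1 | h1 <;> rcases hfi1 with h2 | h2
    · exact Or.inr (Or.inl ((hmk (j+1) 0 (by omega) (by omega) h1 h2).trans Sym2.eq_swap))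
    · exact Or.inl ((hmk (j+1) j (by omega) (by omega) h1 h2).trans Sym2.eq_swap)
    · exact Or.inr (Or.inr (Or.inr ((hmk (k-1) 0 (by omega) (by omega) h1 h2).trans Sym2.eq_swap)))
    · exact Or.inr (Or.inr (Or.inl ((hmk (k-1) j (by omega) (by omega) h1 h2).trans Sym2.eq_swap)))

theorem internal_replacements {V : Type*} [Fintype V] {k : ℕ} (hk : 4 ≤ k)
    (hcard : Fintype.card V = k) (ℓ : Fin k ≃ V) (E : Set (Sym2 V))
    (hE : realizesPath ℓ E)
    (j : ℕ) (hj1 : 1 ≤ j) (hj2 : j ≤ k - 3)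
    (e : Sym2 V) (he : e = s(ℓ ⟨j, by omega⟩, ℓ ⟨j + 1, by omega⟩)) :
    { e' : Sym2 V | ¬ e'.IsDiag ∧ ∃ m : Fin k ≃ V, realizesPath m ((E \ {e}) ∪ {e'}) }
        = {s(ℓ ⟨j, by omega⟩, ℓ ⟨j + 1, by omega⟩),
           s(ℓ ⟨0, by omega⟩, ℓ ⟨j + 1, by omega⟩),
           s(ℓ ⟨j, by omega⟩, ℓ ⟨k - 1, by omega⟩),
           s(ℓ ⟨0, by omega⟩, ℓ ⟨k - 1, by omega⟩)} ∧
      ({s(ℓ ⟨j, by omega⟩, ℓ ⟨j + 1, by omega⟩),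
        s(ℓ ⟨0, by omega⟩, ℓ ⟨j + 1, by omega⟩),
        s(ℓ ⟨j, by omega⟩, ℓ ⟨k - 1, by omega⟩),
        s(ℓ ⟨0, by omega⟩, ℓ ⟨k - 1, by omega⟩)} : Set (Sym2 V)).ncard = 4 := by
  have hjk : j + 1 < k := by omega
  constructor
  · ext x
    simp only [Set.mem_setOf_eq, Set.mem_insert_iff, Set.mem_singleton_iff]
    constructor
    · rintro ⟨hnd, m, hm⟩
      exact hard_dir hk ℓ E hE j hj1 hj2 e he x m hm
    · rintro (rfl | rfl | rfl | rfl)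
      · refine ⟨?_, ?_⟩
        · rw [Sym2.mk_isDiag_iff]
          intro hx
          have := ℓ.injective hx
          rw [Fin.mk.injEq] at this
          omega
        · exact realizes_of_spec ℓ E hE j hjk e he _
            (fun i => i) (fun i h => h) (fun a b _ _ h => h) j hjk
            (sym2_mk_congr ℓ (by omega) (by omega) (show j < k by omega)
              (show j + 1 < k by omega) rfl rfl)
            (fun t ht htj => ⟨t, ht, Or.inl ⟨rfl, rfl⟩⟩)
            (fun i hik hii => ⟨i, hik, hii, Or.inl ⟨rfl, rfl⟩⟩)
      · refine ⟨?_, ?_⟩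
        · rw [Sym2.mk_isDiag_iff]
          intro hx
          have := ℓ.injective hx
          rw [Fin.mk.injEq] at this
          omega
        · refine realizes_of_spec ℓ E hE j hjk e he _
            (fun i => if i ≤ j then j - i else i) (fun i h => by split_ifs <;> omega)
            (fun a b ha hb h => by split_ifs at h <;> omega) j hjk
            (sym2_mk_congr ℓ (by omega) (by omega) ?_ ?_ (by split_ifs <;> omega)
               (by split_ifs <;> omega)) ?_ ?_
          · split_ifs <;> omega
          · split_ifs <;> omega
          · intro t ht htj
            rcases Nat.lt_or_ge t j with h | h
            · exact ⟨j - 1 - t, by omega, by split_ifs <;> omega⟩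
            · exact ⟨t, ht, by split_ifs <;> omega⟩
          · intro i hik hii
            rcases Nat.lt_or_ge i j with h | h
            · exact ⟨j - 1 - i, by omega, by omega, by split_ifs <;> omega⟩
            · exact ⟨i, hik, by omega, by split_ifs <;> omega⟩
      · refine ⟨?_, ?_⟩
        · rw [Sym2.mk_isDiag_iff]
          intro hx
          have := ℓ.injective hx
          rw [Fin.mk.injEq] at this
          omega
        · refine realizes_of_spec ℓ E hE j hjk e he _
            (fun i => if i ≤ j then i else k + j - i) (fun i h => by split_ifs <;> omega)
            (fun a b ha hb h => by split_ifs at h <;> omega) j hjk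
            (sym2_mk_congr ℓ (by omega) (by omega) ?_ ?_ (by split_ifs <;> omega)
               (by split_ifs <;> omega)) ?_ ?_
          · split_ifs <;> omega
          · split_ifs <;> omega
          · intro t ht htj
            rcases Nat.lt_or_ge t j with h | h
            · exact ⟨t, ht, by split_ifs <;> omega⟩
            · exact ⟨k + j - t - 1, by omega, by split_ifs <;> omega⟩
          · intro i hik hii
            rcases Nat.lt_or_ge i j with h | h
            · exact ⟨i, by omega, by omega, by split_ifs <;> omega⟩
            · exact ⟨k + j - i - 1, by omega, by omega, by split_ifs <;> omega⟩
      · refine ⟨?_, ?_⟩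
        · rw [Sym2.mk_isDiag_iff]
          intro hx
          have := ℓ.injective hx
          rw [Fin.mk.injEq] at this
          omega
        · refine realizes_of_spec ℓ E hE j hjk e he _
            (fun i => if i ≤ j then j - i else k + j - i) (fun i h => by split_ifs <;> omega)
            (fun a b ha hb h => by split_ifs at h <;> omega) j hjk
            (sym2_mk_congr ℓ (by omega) (by omega) ?_ ?_ (by split_ifs <;> omega)
               (by split_ifs <;> omega)) ?_ ?_
          · split_ifs <;> omega
          · split_ifs <;> omega
          · intro t ht htj
            rcases Nat.lt_or_ge t j with h | h
            · exact ⟨j - 1 - t, by omega, by split_ifs <;> omega⟩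
            · exact ⟨k + j - t - 1, by omega, by split_ifs <;> omega⟩
          · intro i hik hii
            rcases Nat.lt_or_ge i j with h | h
            · exact ⟨j - 1 - i, by omega, by omega, by split_ifs <;> omega⟩
            · exact ⟨k + j - i - 1, by omega, by omega, by split_ifs <;> omega⟩
  · have n1 : s(ℓ ⟨j, by omega⟩, ℓ ⟨j + 1, by omega⟩) ∉
        ({s(ℓ ⟨0, by omega⟩, ℓ ⟨j + 1, by omega⟩),
          s(ℓ ⟨j, by omega⟩, ℓ ⟨k - 1, by omega⟩),
          s(ℓ ⟨0, by omega⟩, ℓ ⟨k - 1, by omega⟩)} : Set (Sym2 V)) := by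
      simp only [Set.mem_insert_iff, Set.mem_singleton_iff]
      push_neg
      refine ⟨?_, ?_, ?_⟩ <;>
        exact sym2_mk_ne ℓ (by omega) (by omega) (by omega) (by omega) (by omega)
    have n2 : s(ℓ ⟨0, by omega⟩, ℓ ⟨j + 1, by omega⟩) ∉
        ({s(ℓ ⟨j, by omega⟩, ℓ ⟨k - 1, by omega⟩),
          s(ℓ ⟨0, by omega⟩, ℓ ⟨k - 1, by omega⟩)} : Set (Sym2 V)) := by
      simp only [Set.mem_insert_iff, Set.mem_singleton_iff]
      push_neg
      refine ⟨?_, ?_⟩ <;>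
        exact sym2_mk_ne ℓ (by omega) (by omega) (by omega) (by omega) (by omega)
    have n3 : s(ℓ ⟨j, by omega⟩, ℓ ⟨k - 1, by omega⟩) ∉
        ({s(ℓ ⟨0, by omega⟩, ℓ ⟨k - 1, by omega⟩)} : Set (Sym2 V)) := by
      simp only [Set.mem_singleton_iff]
      exact sym2_mk_ne ℓ (by omega) (by omega) (by omega) (by omega) (by omega)
    rw [Set.ncard_insert_of_notMem n1 (Set.toFinite _),
      Set.ncard_insert_of_notMem n2 (Set.toFinite _),
      Set.ncard_insert_of_notMem n3 (Set.toFinite _), Set.ncard_singleton]
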